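/- Let Λ, ω ∈ ℂ with Λ ≠ 0 and ω³ = −(9/4)Λ². Let f : ℂ → ℂ be twice differentiable and satisfy Airy's equation f''(ξ) = ξ·f(ξ) for all ξ ∈ ℂ. Define ξ(Z) := ω(1 + iZ²/Λ), D(Z) := f(ξ(Z)), and S(Z) := (2iω/(3Λ))·f'(ξ(Z)). Then D'(Z) = 3Z·S(Z) and S'(Z) = (3Z + 3iZ³/Λ)·D(Z) for all Z ∈ ℂ. -/

import Mathlib

/-- If `f` solves Airy's equation `f'' = ξf` and `ω³ = −(9/4)Λ²`, then
`D(Z) = f(ω(1 + iZ²/Λ))` and `S(Z) = (2iω/(3Λ)) f'(ω(1 + iZ²/Λ))` solve the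
first-order system `D' = 3ZS`, `S' = (3Z + 3iZ³/Λ)D` coming from the x-equation
of the Painlevé-III (D7) Lax pair for the seed solution. -/
theorem stmt_9 (Λ ω : ℂ) (hΛ : Λ ≠ 0) (hω : ω ^ 3 = -(9 / 4) * Λ ^ 2)
    (f : ℂ → ℂ) (hf : Differentiable ℂ f) (hf' : Differentiable ℂ (deriv f))
    (hairy : ∀ ξ : ℂ, deriv (deriv f) ξ = ξ * f ξ) :
    ∀ Z : ℂ,
      deriv (fun z => f (ω * (1 + Complex.I * z ^ 2 / Λ))) Z
        = 3 * Z * ((2 * Complex.I * ω / (3 * Λ))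
            * deriv f (ω * (1 + Complex.I * Z ^ 2 / Λ)))
      ∧ deriv (fun z => (2 * Complex.I * ω / (3 * Λ))
            * deriv f (ω * (1 + Complex.I * z ^ 2 / Λ))) Z
        = (3 * Z + 3 * Complex.I * Z ^ 3 / Λ)
            * f (ω * (1 + Complex.I * Z ^ 2 / Λ)) := by
  intro Z
  set ξ : ℂ := ω * (1 + Complex.I * Z ^ 2 / Λ) with hξ
  have hg : HasDerivAt (fun z : ℂ => ω * (1 + Complex.I * z ^ 2 / Λ))
      (ω * (Complex.I * (2 * Z) / Λ)) Z := by
    have h1 : HasDerivAt (fun z : ℂ => z ^ 2) (2 * Z) Z := by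
      simpa using hasDerivAt_pow 2 Z
    have := (((h1.const_mul Complex.I).div_const Λ).const_add 1).const_mul ω
    simpa [mul_comm, mul_assoc, mul_left_comm] using this
  have hD : HasDerivAt (fun z => f (ω * (1 + Complex.I * z ^ 2 / Λ)))
      (deriv f ξ * (ω * (Complex.I * (2 * Z) / Λ))) Z :=
    (hf ξ).hasDerivAt.comp Z hg
  have hS : HasDerivAt (fun z => (2 * Complex.I * ω / (3 * Λ))
      * deriv f (ω * (1 + Complex.I * z ^ 2 / Λ)))
      ((2 * Complex.I * ω / (3 * Λ)) *
        (deriv (deriv f) ξ * (ω * (Complex.I * (2 * Z) / Λ)))) Z :=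
    (((hf' ξ).hasDerivAt.comp Z hg)).const_mul _
  constructor
  · rw [hD.deriv]
    field_simp
  · have key : (2 * Complex.I * ω / (3 * Λ)) *
        ((ω * (1 + Complex.I * Z ^ 2 / Λ)) * (ω * (Complex.I * (2 * Z) / Λ)))
        = 3 * Z + 3 * Complex.I * Z ^ 3 / Λ := by
      have hI : Complex.I ^ 2 = -1 := Complex.I_sq
      have hΛ2 : Λ ^ 2 ≠ 0 := pow_ne_zero 2 hΛ
      have hΛ3 : Λ ^ 3 ≠ 0 := pow_ne_zero 3 hΛ
      field_simp
      linear_combination ((-4 : ℂ) * Z * (Λ + Complex.I * Z ^ 2)) * hω +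
        (4 * ω ^ 3 * Z * (Λ + Complex.I * Z ^ 2)) * hI
    rw [hS.deriv, hairy ξ, hξ]
    calc 2 * Complex.I * ω / (3 * Λ) *
          (ω * (1 + Complex.I * Z ^ 2 / Λ) * f (ω * (1 + Complex.I * Z ^ 2 / Λ)) *
            (ω * (Complex.I * (2 * Z) / Λ)))
        = ((2 * Complex.I * ω / (3 * Λ)) *
            ((ω * (1 + Complex.I * Z ^ 2 / Λ)) * (ω * (Complex.I * (2 * Z) / Λ)))) *
            f (ω * (1 + Complex.I * Z ^ 2 / Λ)) := by ring
      _ = _ := by rw [key]
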